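/- Let q ∈ ℝ, q ≠ 1, and suppose f : (0,1] → ℝ satisfies f(xy) + f((1-x)y) - f(y) = (f(x) + f(1-x))·y^q for all x ∈ (0,1), y ∈ (0,1], and f is Lebesgue measurable. Then there exist constants c, c* ∈ ℝ such that f(x) = c*·x + c·x^q for all x ∈ (0,1) and f(1) = 0. -/

import Mathlib

open MeasureTheory Set Filter

lemma aux_mul (H : ℝ → ℝ)
    (hadd : ∀ a b : ℝ, 0 < a → 0 < b → a + b ≤ 1 → H a + H b = H (a + b)) :
    ∀ (n : ℕ) (u : ℝ), 0 < u → ((n : ℝ) + 1) * u ≤ 1 → H (((n : ℝ) + 1) * u) = ((n : ℝ) + 1) * H u := by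
  intro n
  induction n with
  | zero => intro u hu h; norm_num
  | succ n ih =>
    intro u hu h
    have h1 : ((n : ℝ) + 1) * u ≤ 1 := by
      have : (0:ℝ) ≤ u := hu.le
      push_cast at h ⊢; nlinarith
    have h2 : (((n : ℕ) + 1 : ℕ) : ℝ) + 1 = ((n : ℝ) + 1) + 1 := by push_cast; ring
    rw [h2]
    have h3 : (((n : ℝ) + 1) + 1) * u = ((n : ℝ) + 1) * u + u := by ring
    rw [h3, ← hadd _ _ (by positivity) hu (by rw [← h3]; push_cast at h ⊢; linarith),
      ih u hu h1]
    ring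

lemma aux_rat (H : ℝ → ℝ)
    (hadd : ∀ a b : ℝ, 0 < a → 0 < b → a + b ≤ 1 → H a + H b = H (a + b)) :
    ∀ (p n : ℕ), 0 < p → p ≤ n → H ((p : ℝ) / (n : ℝ)) = ((p : ℝ) / (n : ℝ)) * H 1 := by
  intro p n hp hpn
  obtain ⟨m, rfl⟩ : ∃ m, p = m + 1 := ⟨p - 1, (Nat.succ_pred_eq_of_pos hp).symm⟩
  obtain ⟨k, rfl⟩ : ∃ k, n = k + 1 := ⟨n - 1, (Nat.succ_pred_eq_of_pos (lt_of_lt_of_le hp hpn)).symm⟩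
  have hk : (0:ℝ) < (k : ℝ) + 1 := by positivity
  have hinv : (0:ℝ) < 1 / ((k:ℝ) + 1) := by positivity
  have h1 : H 1 = ((k:ℝ) + 1) * H (1 / ((k:ℝ)+1)) := by
    have := aux_mul H hadd k (1 / ((k:ℝ)+1)) hinv (by field_simp; exact le_rfl)
    rw [mul_one_div, div_self (ne_of_gt hk)] at this
    exact this
  have hmn : ((m:ℝ) + 1) ≤ (k:ℝ) + 1 := by exact_mod_cast hpn
  have h2 := aux_mul H hadd m (1 / ((k:ℝ)+1)) hinv (by
    rw [mul_one_div, div_le_one hk]; exact hmn)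
  push_cast
  rw [show ((m:ℝ)+1) / ((k:ℝ)+1) = ((m:ℝ)+1) * (1 / ((k:ℝ)+1)) from by ring, h2, h1]
  field_simp

lemma additive_linear (H : ℝ → ℝ) (hH : Measurable H)
    (hadd : ∀ a b : ℝ, 0 < a → 0 < b → a + b ≤ 1 → H a + H b = H (a + b)) :
    ∀ u : ℝ, 0 < u → u ≤ 1 → H u = u * H 1 := by
  -- Step 1: boundedness near 0
  obtain ⟨C, hC0, hCb⟩ : ∃ C : ℝ, 0 ≤ C ∧ ∀ t : ℝ, 0 < t → t ≤ 1/8 → |H t| ≤ C := by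
    set A : ℕ → Set ℝ := fun n => Ioc (1/2 : ℝ) 1 ∩ {t | |H t| ≤ n} with hA
    have hAmeas : ∀ n, MeasurableSet (A n) := fun n =>
      measurableSet_Ioc.inter (measurableSet_le hH.abs measurable_const)
    have hAmono : Monotone A := by
      intro a b hab t ht
      refine ⟨ht.1, ?_⟩
      have h2 : |H t| ≤ (a:ℝ) := ht.2
      have h3 : ((a:ℕ):ℝ) ≤ (b:ℕ) := by exact_mod_cast hab
      exact le_trans h2 h3
    have hAU : ⋃ n, A n = Ioc (1/2 : ℝ) 1 := by
      apply subset_antisymm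
      · exact iUnion_subset fun n => inter_subset_left
      · intro t ht
        refine mem_iUnion.mpr ⟨⌈|H t|⌉₊, ht, ?_⟩
        have : |H t| ≤ (⌈|H t|⌉₊ : ℝ) := Nat.le_ceil _
        exact this
    have htend := tendsto_measure_iUnion_atTop (μ := volume) hAmono
    rw [hAU, Real.volume_Ioc] at htend
    have h38 : ENNReal.ofReal (3/8) < ENNReal.ofReal (1 - 1/2) := by
      rw [ENNReal.ofReal_lt_ofReal_iff (by norm_num)]; norm_num
    obtain ⟨N, hN⟩ := (htend.eventually (eventually_gt_nhds h38)).exists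
    have hN' : ENNReal.ofReal (3/8) < volume (A N) := hN
    refine ⟨2 * N, by positivity, fun t ht ht8 => ?_⟩
    set B : Set ℝ := (fun u => u + t) ⁻¹' (A N) with hB
    have hBmeas : MeasurableSet B := (hAmeas N).preimage (measurable_add_const t)
    have hBvol : volume B = volume (A N) := measure_preimage_add_right volume t (A N)
    have hsub : A N ∪ B ⊆ Ioc (3/8 : ℝ) 1 := by
      rintro u (hu | hu)
      · exact ⟨by linarith [hu.1.1], hu.1.2⟩
      · have h1 : 1/2 < u + t := hu.1.1
        have h2 : u + t ≤ 1 := hu.1.2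
        exact ⟨by linarith, by linarith⟩
    have hinter : (A N ∩ B).Nonempty := by
      by_contra hc
      rw [not_nonempty_iff_eq_empty] at hc
      have heq := measure_union_add_inter (μ := volume) (A N) hBmeas
      rw [hc, measure_empty, add_zero, hBvol] at heq
      have hle : volume (A N ∪ B) ≤ volume (Ioc (3/8 : ℝ) 1) := measure_mono hsub
      rw [heq, Real.volume_Ioc] at hle
      have hlt : ENNReal.ofReal (3/8) + ENNReal.ofReal (3/8) < volume (A N) + volume (A N) :=
        ENNReal.add_lt_add hN' hN'
      rw [← ENNReal.ofReal_add (by norm_num) (by norm_num)] at hlt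
      have h58 : ENNReal.ofReal (1 - 3/8) ≤ ENNReal.ofReal (3/8 + 3/8) := by
        rw [ENNReal.ofReal_le_ofReal_iff (by norm_num)]; norm_num
      exact absurd (lt_of_le_of_lt (hle.trans h58) hlt) (lt_irrefl _)
    obtain ⟨u, hu, huB⟩ := hinter
    have h1 : 0 < u := lt_trans (by norm_num) hu.1.1
    have h2 : u + t ≤ 1 := huB.1.2
    have hadd' := hadd u t h1 ht h2
    have e1 : |H u| ≤ N := hu.2
    have e2 : |H (u + t)| ≤ N := huB.2
    calc |H t| = |H (u + t) - H u| := by rw [← hadd']; congr 1; ring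
    _ ≤ |H (u + t)| + |H u| := abs_sub _ _
    _ ≤ 2 * N := by linarith
  -- Step 2: smallness at 0
  have hsmall : ∀ n : ℕ, ∀ t : ℝ, 0 < t → t ≤ 1 / (8 * ((n:ℝ) + 1)) → |H t| ≤ C / ((n:ℝ)+1) := by
    intro n t ht htle
    have hn1 : (0:ℝ) < (n:ℝ) + 1 := by positivity
    have hle1 : ((n:ℝ)+1) * t ≤ 1/8 := by
      have h8 : (0:ℝ) < 8 * ((n:ℝ)+1) := by positivity
      rw [le_div_iff₀ h8] at htle
      nlinarith
    have hmul := aux_mul H hadd n t ht (le_trans hle1 (by norm_num))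
    have hb := hCb (((n:ℝ)+1) * t) (by positivity) hle1
    rw [hmul, abs_mul, abs_of_pos hn1] at hb
    rw [le_div_iff₀ hn1]
    linarith [hb]
  -- Step 3: conclude
  intro u hu hu1
  have key : ∀ ε : ℝ, 0 < ε → |H u - u * H 1| ≤ ε := by
    intro ε hε
    obtain ⟨n, hn⟩ := exists_nat_gt ((C + |H 1|) / ε)
    have hn0 : (0:ℝ) < (n:ℝ) + 1 := by positivity
    have hfrac : (C + |H 1|) / ((n:ℝ) + 1) < ε := by
      rw [div_lt_iff₀ hn0]
      have h1 : (C + |H 1|) / ε < (n:ℝ) + 1 := lt_of_lt_of_le hn (by linarith)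
      rw [div_lt_iff₀ hε] at h1
      linarith
    set δ : ℝ := min (1 / (8 * ((n:ℝ) + 1))) u with hδ
    have hδ0 : 0 < δ := lt_min (by positivity) hu
    have hδ1 : δ ≤ 1 / (8 * ((n:ℝ) + 1)) := min_le_left _ _
    have hδu : δ ≤ u := min_le_right _ _
    obtain ⟨r, hr1, hr2⟩ := exists_rat_btwn (show u - δ < u by linarith)
    have hr0 : (0:ℝ) < (r:ℝ) := by linarith
    have hrq0 : 0 < r := by exact_mod_cast hr0
    have hr1' : (r:ℝ) ≤ 1 := le_trans hr2.le hu1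
    have hHr : H (r:ℝ) = (r:ℝ) * H 1 := by
      have hnum : (0:ℤ) < r.num := Rat.num_pos.mpr hrq0
      have hcast : (r:ℝ) = (r.num.toNat : ℝ) / (r.den : ℝ) := by
        rw [Rat.cast_def]
        congr 1
        exact_mod_cast (Int.toNat_of_nonneg hnum.le).symm
      have hp : 0 < r.num.toNat := by omega
      have hden : (0:ℝ) < (r.den : ℝ) := by exact_mod_cast r.pos
      have hpn : r.num.toNat ≤ r.den := by
        by_contra hc
        push_neg at hc
        have hlt : (r.den : ℝ) < (r.num.toNat : ℝ) := by exact_mod_cast hc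
        have : (1:ℝ) < (r.num.toNat : ℝ) / (r.den : ℝ) := (one_lt_div hden).mpr hlt
        rw [← hcast] at this
        linarith
      rw [hcast]
      exact aux_rat H hadd _ _ hp hpn
    have hsum : H (r:ℝ) + H (u - r) = H u := by
      have := hadd (r:ℝ) (u - r) hr0 (by linarith) (by linarith)
      rwa [show (r:ℝ) + (u - (r:ℝ)) = u by ring] at this
    have hsm : |H (u - r)| ≤ C / ((n:ℝ)+1) := by
      apply hsmall n (u - r) (by linarith)
      have : u - (r:ℝ) < δ := by linarith
      linarith
    have hur : |u - (r:ℝ)| ≤ 1 / (8 * ((n:ℝ)+1)) := by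
      rw [abs_of_pos (by linarith : (0:ℝ) < u - r)]
      have : u - (r:ℝ) < δ := by linarith
      linarith
    calc |H u - u * H 1| = |H (u - r) + ((r:ℝ) - u) * H 1| := by
          rw [← hsum, hHr]; congr 1; ring
    _ ≤ |H (u - r)| + |((r:ℝ) - u) * H 1| := abs_add_le _ _
    _ ≤ C / ((n:ℝ)+1) + |u - (r:ℝ)| * |H 1| := by
          rw [abs_mul, abs_sub_comm]
          exact add_le_add hsm (le_refl _)
    _ ≤ C / ((n:ℝ)+1) + (1 / (8 * ((n:ℝ)+1))) * |H 1| := by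
          have := mul_le_mul_of_nonneg_right hur (abs_nonneg (H 1))
          linarith
    _ ≤ C / ((n:ℝ)+1) + |H 1| / ((n:ℝ)+1) := by
          have e : 1 / (8 * ((n:ℝ)+1)) * |H 1| = |H 1| / (8 * ((n:ℝ)+1)) := by ring
          rw [e]
          gcongr
          linarith
    _ = (C + |H 1|) / ((n:ℝ)+1) := (add_div C (|H 1|) _).symm
    _ ≤ ε := hfrac.le
  have h0 : |H u - u * H 1| ≤ 0 := by
    by_contra hc
    push_neg at hc
    have := key (|H u - u * H 1| / 2) (by linarith)
    linarith
  have h1 : H u - u * H 1 = 0 := abs_nonpos_iff.mp h0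
  linarith


theorem stmt_4 (q : ℝ) (hq : q ≠ 1) (f : ℝ → ℝ)
    (hf : ∀ x ∈ Set.Ioo (0:ℝ) 1, ∀ y ∈ Set.Ioc (0:ℝ) 1,
      f (x * y) + f ((1 - x) * y) - f y = (f x + f (1 - x)) * y ^ q)
    (hmeas : Measurable fun x : Set.Ioc (0:ℝ) 1 => f x) :
    ∃ c cs : ℝ, (∀ x ∈ Set.Ioo (0:ℝ) 1, f x = cs * x + c * x ^ q) ∧ f 1 = 0 := by
  have hIoc : MeasurableSet (Set.Ioc (0:ℝ) 1) := measurableSet_Ioc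
  set F : ℝ → ℝ := Function.extend (Subtype.val : Set.Ioc (0:ℝ) 1 → ℝ)
    (fun x : Set.Ioc (0:ℝ) 1 => f x) (fun _ => 0) with hFdef
  have hFmeas : Measurable F :=
    (MeasurableEmbedding.subtype_coe hIoc).measurable_extend hmeas measurable_const
  have hFeq : ∀ u : ℝ, u ∈ Set.Ioc (0:ℝ) 1 → F u = f u := by
    intro u hu
    exact (MeasurableEmbedding.subtype_coe hIoc).injective.extend_apply
      (fun x : Set.Ioc (0:ℝ) 1 => f x) (fun _ => 0) ⟨u, hu⟩
  have hf1 : f 1 = 0 := by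
    have h := hf (1/2) ⟨by norm_num, by norm_num⟩ 1 ⟨by norm_num, le_refl 1⟩
    rw [Real.one_rpow] at h
    norm_num at h
    linarith
  have key : ∀ u ∈ Set.Ioc (0:ℝ) 1, ∀ z ∈ Set.Ioc (0:ℝ) 1,
      f (u * z) = z ^ q * f u + u * f z := by
    intro u hu z hz
    set H : ℝ → ℝ := fun w => F (w * z) - z ^ q * F w - w * f z with hHdef
    have hHmeas : Measurable H :=
      ((hFmeas.comp (measurable_mul_const z)).sub (hFmeas.const_mul _)).sub
        (measurable_id.mul_const (f z))
    have hadd : ∀ a b : ℝ, 0 < a → 0 < b → a + b ≤ 1 → H a + H b = H (a + b) := by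
      intro a b ha hb hab
      have hs0 : 0 < a + b := by linarith
      have hx : a / (a + b) ∈ Set.Ioo (0:ℝ) 1 := by
        constructor
        · positivity
        · rw [div_lt_one hs0]; linarith
      have hsmem : a + b ∈ Set.Ioc (0:ℝ) 1 := ⟨hs0, hab⟩
      have hszmem : (a + b) * z ∈ Set.Ioc (0:ℝ) 1 :=
        ⟨mul_pos hs0 hz.1, by nlinarith [hz.1, hz.2, hs0, hab]⟩
      have eq1 := hf (a / (a + b)) hx (a + b) hsmem
      have eq2 := hf (a / (a + b)) hx ((a + b) * z) hszmem
      have r1 : a / (a + b) * (a + b) = a := div_mul_cancel₀ a (ne_of_gt hs0)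
      have r2 : (1 - a / (a + b)) * (a + b) = b := by field_simp; ring
      have r3 : a / (a + b) * ((a + b) * z) = a * z := by field_simp
      have r4 : (1 - a / (a + b)) * ((a + b) * z) = b * z := by field_simp; ring
      rw [r1, r2] at eq1
      rw [r3, r4] at eq2
      rw [Real.mul_rpow hs0.le hz.1.le] at eq2
      have hamem : a ∈ Set.Ioc (0:ℝ) 1 := ⟨ha, by linarith⟩
      have hbmem : b ∈ Set.Ioc (0:ℝ) 1 := ⟨hb, by linarith⟩
      have hazmem : a * z ∈ Set.Ioc (0:ℝ) 1 :=
        ⟨mul_pos ha hz.1, by nlinarith [hz.1, hz.2]⟩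
      have hbzmem : b * z ∈ Set.Ioc (0:ℝ) 1 :=
        ⟨mul_pos hb hz.1, by nlinarith [hz.1, hz.2]⟩
      simp only [hHdef]
      rw [hFeq _ hamem, hFeq _ hbmem, hFeq _ hsmem, hFeq _ hazmem, hFeq _ hbzmem,
        hFeq _ hszmem]
      linear_combination eq2 - z ^ q * eq1
    have hlin := additive_linear H hHmeas hadd u hu.1 hu.2
    have hH1 : H 1 = 0 := by
      simp only [hHdef, one_mul]
      rw [hFeq _ hz, hFeq _ ⟨one_pos, le_refl (1:ℝ)⟩, hf1]
      ring
    rw [hH1, mul_zero] at hlin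
    have huzmem : u * z ∈ Set.Ioc (0:ℝ) 1 :=
      ⟨mul_pos hu.1 hz.1, by nlinarith [hz.1, hz.2, hu.1, hu.2]⟩
    simp only [hHdef] at hlin
    rw [hFeq _ huzmem, hFeq _ hu] at hlin
    linarith
  have hhalf : (1/2 : ℝ) ∈ Set.Ioc (0:ℝ) 1 := ⟨by norm_num, by norm_num⟩
  have hd : ((1/2:ℝ) ^ q - 1/2) ≠ 0 := by
    rw [sub_ne_zero]
    intro hcon
    apply hq
    have hlog := congrArg Real.log hcon
    rw [Real.log_rpow (by norm_num : (0:ℝ) < 1/2)] at hlog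
    have hlne : Real.log (1/2) ≠ 0 := ne_of_lt (Real.log_neg (by norm_num) (by norm_num))
    have h1 : q * Real.log (1/2) = 1 * Real.log (1/2) := by rw [one_mul]; exact hlog
    exact mul_right_cancel₀ hlne h1
  refine ⟨f (1/2) / ((1/2:ℝ) ^ q - 1/2), -(f (1/2) / ((1/2:ℝ) ^ q - 1/2)), fun x hx => ?_, hf1⟩
  have e1 := key x ⟨hx.1, hx.2.le⟩ (1/2) hhalf
  have e2 := key (1/2) hhalf x ⟨hx.1, hx.2.le⟩
  rw [mul_comm] at e1
  have hxq : f x * ((1/2:ℝ) ^ q - 1/2) = f (1/2) * (x ^ q - x) := by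
    linear_combination e2 - e1
  have hfx : f x = f (1/2) * (x ^ q - x) / ((1/2:ℝ) ^ q - 1/2) := by
    rw [eq_div_iff hd]
    exact hxq
  rw [hfx]
  field_simp
  ring
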